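/- There is no injective K-algebra homomorphism ε : E^(3) → M₂(Ω), for any commutative K-algebra Ω, with tr(ε(g)) ∈ K for all g ∈ E^(3). Concretely, there exist no c₁, c₂ ∈ K such that (v₁ + v₂v₃)² + c₁(v₁ + v₂v₃) + c₂ = 0 holds in E^(3). -/
import Mathlib

open ExteriorAlgebra Matrix

/-- Auxiliary family of alternating maps: the determinant in degree 3, zero elsewhere. -/
noncomputable def myf (K : Type) [Field K] : ∀ i, (Fin 3 → K) [⋀^Fin i]→ₗ[K] K
  | 3 => Matrix.detRowAlternating
  | _ => 0

/-- The degree-3 "coefficient" functional on the Grassmann algebra `E⁽³⁾`. -/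
noncomputable def myF (K : Type) [Field K] : ExteriorAlgebra K (Fin 3 → K) →ₗ[K] K :=
  ExteriorAlgebra.liftAlternating (myf K)

theorem myF_triple (K : Type) [Field K] (x y z : Fin 3 → K) :
    myF K (ι K x * (ι K y * ι K z)) = Matrix.det (Matrix.of ![x, y, z]) := by
  rw [myF, liftAlternating_ι_mul, liftAlternating_ι_mul, liftAlternating_ι]
  simp [myf]
  rfl

theorem myF_pair (K : Type) [Field K] (x y : Fin 3 → K) : myF K (ι K x * ι K y) = 0 := by
  rw [myF, liftAlternating_ι_mul, liftAlternating_ι]; simp [myf]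

theorem myF_single (K : Type) [Field K] (x : Fin 3 → K) : myF K (ι K x) = 0 := by
  rw [myF, liftAlternating_ι]; simp [myf]

theorem myF_alg (K : Type) [Field K] (r : K) : myF K (algebraMap K _ r) = 0 := by
  rw [myF, liftAlternating_algebraMap]; simp [myf]

/-- The concrete statement: no degree-2 monic relation holds for `v₁ + v₂v₃` in `E⁽³⁾`. -/
theorem part2 (K : Type) [Field K] [CharZero K] :
    ¬ ∃ c₁ c₂ : K,
        (ExteriorAlgebra.ι K ((Pi.single 0 1 : Fin 3 → K)) +
            ExteriorAlgebra.ι K ((Pi.single 1 1 : Fin 3 → K)) *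
              ExteriorAlgebra.ι K ((Pi.single 2 1 : Fin 3 → K))) ^ 2 +
          c₁ • (ExteriorAlgebra.ι K ((Pi.single 0 1 : Fin 3 → K)) +
            ExteriorAlgebra.ι K ((Pi.single 1 1 : Fin 3 → K)) *
              ExteriorAlgebra.ι K ((Pi.single 2 1 : Fin 3 → K))) +
          algebraMap K (ExteriorAlgebra K (Fin 3 → K)) c₂ = 0 := by
  rintro ⟨c₁, c₂, h⟩
  set x : Fin 3 → K := Pi.single 0 1 with hx
  set y : Fin 3 → K := Pi.single 1 1 with hy
  set z : Fin 3 → K := Pi.single 2 1 with hz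
  set a := ExteriorAlgebra.ι K x with ha
  set b := ExteriorAlgebra.ι K y with hb
  set c := ExteriorAlgebra.ι K z with hc
  have haa : a * a = 0 := ExteriorAlgebra.ι_sq_zero x
  have hcc : c * c = 0 := ExteriorAlgebra.ι_sq_zero z
  have hcb : c * b = -(b * c) :=
    eq_neg_of_add_eq_zero_left (ExteriorAlgebra.ι_add_mul_swap z y)
  have hbcbc : (b * c) * (b * c) = 0 := by
    calc (b * c) * (b * c) = b * ((c * b) * c) := by rw [mul_assoc, mul_assoc]
    _ = 0 := by rw [hcb, neg_mul, mul_assoc, hcc, mul_zero, neg_zero, mul_zero]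
  have hsq : (a + b * c) ^ 2 = a * (b * c) + b * (c * a) := by
    rw [sq, add_mul, mul_add, mul_add, haa, hbcbc, zero_add, add_zero, mul_assoc]
  have happ := congrArg (myF K) h
  rw [hsq] at happ
  simp only [ha, hb, hc, map_add, _root_.map_smul, map_zero, myF_triple, myF_pair,
    myF_single, myF_alg, smul_zero, add_zero, zero_add, smul_add] at happ
  simp [hx, hy, hz, Matrix.det_fin_three, Pi.single_apply] at happ

/-- Cayley–Hamilton with constant traces: a `2 × 2` matrix whose trace and the trace of
whose square come from `K` satisfies a monic quadratic with coefficients from `K`. -/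
theorem myCH (K : Type) [Field K] [CharZero K] (Ω : Type*) [CommRing Ω] [Algebra K Ω]
    (M : Matrix (Fin 2) (Fin 2) Ω) (k₁ k₂ : K)
    (h1 : Matrix.trace M = algebraMap K Ω k₁)
    (h2 : Matrix.trace (M ^ 2) = algebraMap K Ω k₂) :
    M ^ 2 + (-k₁) • M + algebraMap K (Matrix (Fin 2) (Fin 2) Ω) ((k₁ ^ 2 - k₂) / 2) = 0 := by
  obtain ⟨a, b, c, d, hM⟩ : ∃ a b c d, M = !![a, b; c, d] :=
    ⟨M 0 0, M 0 1, M 1 0, M 1 1, by ext i j; fin_cases i <;> fin_cases j <;> rfl⟩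
  subst hM
  set t := algebraMap K Ω k₁ with ht
  set e := algebraMap K Ω ((k₁ ^ 2 - k₂) / 2) with hee
  have e1 : t = a + d := by rw [← h1, Matrix.trace_fin_two]; simp
  have e2 : algebraMap K Ω k₂ = a * a + b * c + (c * b + d * d) := by
    rw [← h2, sq, Matrix.trace_fin_two]
    simp [Matrix.mul_apply, Fin.sum_univ_two]
  have h2alg : (2 : Ω) = algebraMap K Ω 2 := (map_ofNat _ 2).symm
  have hd : (2 : Ω) * e = (a + d) ^ 2 - (a * a + b * c + (c * b + d * d)) := by
    rw [← e2, ← e1, hee, ht, h2alg, ← _root_.map_mul, ← map_pow, ← map_sub]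
    congr 1
    ring
  have h0 : !![a, b; c, d] ^ 2 + (-k₁) • !![a, b; c, d] +
        algebraMap K (Matrix (Fin 2) (Fin 2) Ω) ((k₁ ^ 2 - k₂) / 2)
      = !![a, b; c, d] ^ 2 + (-t) • !![a, b; c, d] + e • (1 : Matrix (Fin 2) (Fin 2) Ω) := by
    have h01 : algebraMap K (Matrix (Fin 2) (Fin 2) Ω) ((k₁ ^ 2 - k₂) / 2)
        = e • (1 : Matrix (Fin 2) (Fin 2) Ω) := by
      ext i j
      simp [Matrix.algebraMap_matrix_apply, Matrix.one_apply, hee, mul_ite]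
    have h02 : (-k₁) • !![a, b; c, d] = (-t) • !![a, b; c, d] := by
      rw [← algebraMap_smul Ω (-k₁) !![a, b; c, d], map_neg]
    rw [h02, h01]
  rw [h0]
  clear_value t e
  have key : (2 : Ω) • (!![a, b; c, d] ^ 2 + (-t) • !![a, b; c, d] +
      e • (1 : Matrix (Fin 2) (Fin 2) Ω)) = 0 := by
    rw [← Matrix.ext_iff]
    simp only [Fin.forall_fin_two]
    simp [Matrix.mul_apply, Fin.sum_univ_two, sq, Matrix.one_apply, smul_eq_mul, e1]
    refine ⟨⟨?_, ?_⟩, ?_, ?_⟩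
    · linear_combination hd
    · ring
    · ring
    · linear_combination hd
  have hinv : algebraMap K Ω (1 / 2) * (2 : Ω) = 1 := by
    rw [h2alg, ← _root_.map_mul]
    norm_num
  calc !![a, b; c, d] ^ 2 + (-t) • !![a, b; c, d] + e • (1 : Matrix (Fin 2) (Fin 2) Ω)
      = (algebraMap K Ω (1 / 2) * (2 : Ω)) • (!![a, b; c, d] ^ 2 + (-t) • !![a, b; c, d] +
        e • (1 : Matrix (Fin 2) (Fin 2) Ω)) := by
        rw [hinv, one_smul]
    _ = algebraMap K Ω (1 / 2) • ((2 : Ω) • (!![a, b; c, d] ^ 2 + (-t) • !![a, b; c, d] +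
        e • (1 : Matrix (Fin 2) (Fin 2) Ω))) := by
        rw [mul_smul]
    _ = 0 := by rw [key, smul_zero]

/-- `E⁽³⁾` admits no constant-trace embedding into `2 × 2` matrices over any
commutative `K`-algebra; concretely, no `c₁, c₂ ∈ K` satisfy
`(v₁ + v₂v₃)² + c₁(v₁ + v₂v₃) + c₂ = 0` in `E⁽³⁾`. -/
theorem stmt_10.{u} (K : Type) [Field K] [CharZero K] :
    (∀ (Ω : Type u) [CommRing Ω] [Algebra K Ω]
        (ε : ExteriorAlgebra K (Fin 3 → K) →ₐ[K] Matrix (Fin 2) (Fin 2) Ω),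
      Function.Injective ε →
        ¬ (∀ g, ∃ k : K, Matrix.trace (ε g) = algebraMap K Ω k)) ∧
    ¬ ∃ c₁ c₂ : K,
        (ExteriorAlgebra.ι K ((Pi.single 0 1 : Fin 3 → K)) +
            ExteriorAlgebra.ι K ((Pi.single 1 1 : Fin 3 → K)) *
              ExteriorAlgebra.ι K ((Pi.single 2 1 : Fin 3 → K))) ^ 2 +
          c₁ • (ExteriorAlgebra.ι K ((Pi.single 0 1 : Fin 3 → K)) +
            ExteriorAlgebra.ι K ((Pi.single 1 1 : Fin 3 → K)) *
              ExteriorAlgebra.ι K ((Pi.single 2 1 : Fin 3 → K))) +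
          algebraMap K (ExteriorAlgebra K (Fin 3 → K)) c₂ = 0 := by
  refine ⟨?_, part2 K⟩
  intro Ω _ _ ε hinj htr
  set g := ExteriorAlgebra.ι K ((Pi.single 0 1 : Fin 3 → K)) +
      ExteriorAlgebra.ι K ((Pi.single 1 1 : Fin 3 → K)) *
        ExteriorAlgebra.ι K ((Pi.single 2 1 : Fin 3 → K)) with hg
  obtain ⟨k₁, h1⟩ := htr g
  obtain ⟨k₂, h2⟩ := htr (g ^ 2)
  rw [map_pow] at h2
  have hch := myCH K Ω (ε g) k₁ k₂ h1 h2
  refine part2 K ⟨-k₁, (k₁ ^ 2 - k₂) / 2, ?_⟩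
  rw [← hg]
  apply hinj
  rw [map_zero, map_add, map_add, map_pow, _root_.map_smul, AlgHom.commutes]
  exact hch
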